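/- Let p ≥ 1, 1 ≤ p_β ≤ p, r ≥ 1 and n ≥ 1 be integers. Let β ∈ S^{p_β}_r(n) be such that β(v) ≠ 0 for all v ∈ [0,1] and, on each knot interval [i/n,(i+1)/n], the polynomial representing β has degree exactly p_β. Let g ∈ S^p_r(n) be such that the function v ↦ β(v)·g'(v) belongs to S^p_r(n). Then g ∈ S^{min(p, p−p_β+1)}_{r+1}(n), i.e., g is (r+1) times continuously differentiable on [0,1] and, on each knot interval, g coincides with a polynomial of degree at most min(p, p − p_β + 1). (This is the restriction part of Theorem 5.3 concerning the trace data g₀: when the gluing coefficient β^{(R)} has exact degree p_β ≥ 1, the trace of C¹ isogeometric functions is constrained to smoother splines of reduced degree.) -/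

import Mathlib

/-- `S^p_r(n)`: the space of functions `f : [0,1] → ℝ` that are `r` times continuously
differentiable on `[0,1]` and coincide, on each interval `[i/n, (i+1)/n]` for
`i = 0,…,n−1`, with a polynomial of degree at most `p`. -/
def IsSpline (p r n : ℕ) (f : ℝ → ℝ) : Prop :=
  ContDiffOn ℝ r f (Set.Icc 0 1) ∧
  ∀ i : ℕ, i < n →
    ∃ q : Polynomial ℝ, q.natDegree ≤ p ∧
      ∀ x ∈ Set.Icc ((i : ℝ) / n) (((i : ℝ) + 1) / n), f x = q.eval x

lemma poly_eq_of_eq_on_Ioo {a b : ℝ} (hab : a < b) {q₁ q₂ : Polynomial ℝ}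
    (h : ∀ x ∈ Set.Ioo a b, q₁.eval x = q₂.eval x) : q₁ = q₂ := by
  have hinf : (Set.Ioo a b).Infinite := Set.Ioo_infinite hab
  have : q₁ - q₂ = 0 := by
    apply Polynomial.eq_zero_of_infinite_isRoot
    apply Set.Infinite.mono _ hinf
    intro x hx
    simp [Polynomial.IsRoot, h x hx]
  have := sub_eq_zero.mp this
  exact this

/-- Restriction part of Theorem 5.3 for the trace data: if the gluing coefficient
`β ∈ S^{p_β}_r(n)` is nonvanishing on `[0,1]` and has exact degree `p_β` on each knot
interval, and `g ∈ S^p_r(n)` is such that `β·g' ∈ S^p_r(n)`, then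
`g ∈ S^{min(p, p−p_β+1)}_{r+1}(n)`. -/
theorem stmt18 (p pb r n : ℕ) (hp : 1 ≤ p) (hpb1 : 1 ≤ pb) (hpb2 : pb ≤ p)
    (hr : 1 ≤ r) (hn : 1 ≤ n)
    (β : ℝ → ℝ) (hβ : IsSpline pb r n β)
    (hβne : ∀ v ∈ Set.Icc (0 : ℝ) 1, β v ≠ 0)
    (hexact : ∀ i : ℕ, i < n → ∀ q : Polynomial ℝ,
      (∀ x ∈ Set.Icc ((i : ℝ) / n) (((i : ℝ) + 1) / n), β x = q.eval x) →
      q.natDegree = pb)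
    (g : ℝ → ℝ) (hg : IsSpline p r n g)
    (hprod : IsSpline p r n (fun v => β v * derivWithin g (Set.Icc 0 1) v)) :
    IsSpline (min p (p - pb + 1)) (r + 1) n g := by
  have hn0 : (0:ℝ) < n := by exact_mod_cast hn
  constructor
  · -- smoothness: g is C^{r+1}
    have hud : UniqueDiffOn ℝ (Set.Icc (0:ℝ) 1) := uniqueDiffOn_Icc one_pos
    have h1r : (1 : WithTop ℕ∞) ≤ (r : ℕ)  := by exact_mod_cast hr
    have hdiff : DifferentiableOn ℝ g (Set.Icc (0:ℝ) 1) := hg.1.differentiableOn (lt_of_lt_of_le zero_lt_one h1r).ne'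
    have hD : ContDiffOn ℝ r (derivWithin g (Set.Icc 0 1)) (Set.Icc (0:ℝ) 1) := by
      have hq : ContDiffOn ℝ r
          (fun v => (β v * derivWithin g (Set.Icc 0 1) v) / β v) (Set.Icc (0:ℝ) 1) :=
        hprod.1.div hβ.1 hβne
      apply hq.congr
      intro x hx
      field_simp [hβne x hx]
    have : ContDiffOn ℝ ((r : WithTop ℕ∞) + 1) g (Set.Icc (0:ℝ) 1) := by
      rw [contDiffOn_succ_iff_derivWithin hud]
      refine ⟨hdiff, ?_, hD⟩
      intro h
      exact absurd h (by simp)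
    exact_mod_cast this
  · -- degree bound on each knot interval
    intro i hi
    obtain ⟨qg, hqgdeg, hqg⟩ := hg.2 i hi
    obtain ⟨qβ, _, hqβ⟩ := hβ.2 i hi
    obtain ⟨q, hqdeg, hq⟩ := hprod.2 i hi
    refine ⟨qg, ?_, hqg⟩
    have hβdeg : qβ.natDegree = pb := hexact i hi qβ hqβ
    have hab : (i:ℝ)/n < ((i:ℝ)+1)/n := by
      gcongr <;> linarith
    -- On the open interval, derivWithin g equals qg'
    have hsub : Set.Icc ((i:ℝ)/n) (((i:ℝ)+1)/n) ⊆ Set.Icc 0 1 := by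
      apply Set.Icc_subset_Icc
      · positivity
      · rw [div_le_one hn0]
        have : (i:ℝ) + 1 ≤ n := by exact_mod_cast hi
        linarith
    have key : ∀ x ∈ Set.Ioo ((i:ℝ)/n) (((i:ℝ)+1)/n),
        (qβ * qg.derivative).eval x = q.eval x := by
      intro x hx
      have hxI : Set.Ioo ((i:ℝ)/n) (((i:ℝ)+1)/n) ∈ nhds x := by
        exact Ioo_mem_nhds hx.1 hx.2
      have hIcc : Set.Icc (0:ℝ) 1 ∈ nhds x :=
        Filter.mem_of_superset hxI (fun y hy => hsub (Set.Ioo_subset_Icc_self hy))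
      have hdw : derivWithin g (Set.Icc 0 1) x = deriv g x := derivWithin_of_mem_nhds hIcc
      have hgev : g =ᶠ[nhds x] (fun y => qg.eval y) := by
        filter_upwards [hxI] with y hy
        exact hqg y (Set.Ioo_subset_Icc_self hy)
      have hderiv : deriv g x = qg.derivative.eval x := by
        rw [hgev.deriv_eq, Polynomial.deriv]
      have := hq x (Set.Ioo_subset_Icc_self hx)
      simp only at this
      rw [hdw, hderiv, hqβ x (Set.Ioo_subset_Icc_self hx)] at this
      rw [Polynomial.eval_mul]
      exact this
    have hpoly : qβ * qg.derivative = q := poly_eq_of_eq_on_Ioo hab key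
    by_cases hder : qg.derivative = 0
    · have : qg.natDegree = 0 := Polynomial.natDegree_eq_zero_of_derivative_eq_zero hder
      rw [this]
      exact Nat.zero_le _
    · have hqβ0 : qβ ≠ 0 := by
        intro h
        rw [h] at hβdeg
        simp at hβdeg
        omega
      have hmul : (qβ * qg.derivative).natDegree = pb + qg.derivative.natDegree := by
        rw [Polynomial.natDegree_mul hqβ0 hder, hβdeg]
      have hqg1 : 1 ≤ qg.natDegree := by
        by_contra h
        push_neg at h
        interval_cases h' : qg.natDegree
        · exact hder (Polynomial.derivative_of_natDegree_zero h')
      have hdd : qg.derivative.natDegree = qg.natDegree - 1 := by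
        have h1 : 0 < qg.natDegree := by omega
        have h2 := Polynomial.degree_derivative_eq qg h1
        exact Polynomial.natDegree_eq_of_degree_eq_some h2
      have hle : pb + (qg.natDegree - 1) ≤ p := by
        rw [← hdd, ← hmul, hpoly]; exact hqdeg
      omega
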